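/- Let E and F be Banach spaces, 1 ≤ p ≤ s < ∞, and T : E → F a bounded linear operator whose adjoint T* : F* → E* is absolutely p-summing. Then for every weakly s-summable sequence (x_j)_{j=1}^∞ in E and every weakly p-summable sequence (y_n*)_{n=1}^∞ in F*, one has (∑_{j=1}^∞ (∑_{n=1}^∞ |y_n*(T(x_j))|^p)^{s/p})^{1/s} ≤ π_p(T*) · ‖(x_j)‖_{w,s} · ‖(y_n*)‖_{w,p}; in particular (T(x_j))_{j=1}^∞ is mid (s,p)-summable in F whenever (x_j)_{j=1}^∞ is weakly s-summable in E. -/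

import Mathlib

open NormedSpace MeasureTheory

noncomputable section

/-- A sequence `x` in `E` is weakly `p`-summable: `∑_j |φ(x_j)|^p < ∞` for all `φ ∈ E*`. -/
def WeaklySummable (𝕜 : Type*) [RCLike 𝕜] {E : Type*} [NormedAddCommGroup E]
    [NormedSpace 𝕜 E] (p : ℝ) (x : ℕ → E) : Prop :=
  ∀ φ : StrongDual 𝕜 E, Summable fun j => ‖φ (x j)‖ ^ p

/-- The weak `p`-norm of a sequence: `sup_{φ ∈ B_{E*}} (∑_j |φ(x_j)|^p)^{1/p}`. -/
def weakNorm (𝕜 : Type*) [RCLike 𝕜] {E : Type*} [NormedAddCommGroup E]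
    [NormedSpace 𝕜 E] (p : ℝ) (x : ℕ → E) : ℝ :=
  ⨆ φ : {φ : StrongDual 𝕜 E // ‖φ‖ ≤ 1}, (∑' j, ‖φ.1 (x j)‖ ^ p) ^ (1 / p)

/-- A sequence `x` in `E` is mid `(q,p)`-summable:
`∑_j (∑_n |x_n^*(x_j)|^p)^{q/p} < ∞` for every weakly `p`-summable sequence `(x_n^*)` in `E*`. -/
def MidSummable (𝕜 : Type*) [RCLike 𝕜] {E : Type*} [NormedAddCommGroup E]
    [NormedSpace 𝕜 E] (q p : ℝ) (x : ℕ → E) : Prop :=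
  ∀ xs : ℕ → StrongDual 𝕜 E, WeaklySummable 𝕜 p xs →
    Summable fun j => (∑' n, ‖xs n (x j)‖ ^ p) ^ (q / p)

/-- The mid `(q,p)`-norm:
`sup over (x_n^*) in the closed unit ball of ℓ_p^w(E*)` of
`(∑_j (∑_n |x_n^*(x_j)|^p)^{q/p})^{1/q}`. -/
def midNorm (𝕜 : Type*) [RCLike 𝕜] {E : Type*} [NormedAddCommGroup E]
    [NormedSpace 𝕜 E] (q p : ℝ) (x : ℕ → E) : ℝ :=
  ⨆ xs : {xs : ℕ → StrongDual 𝕜 E // WeaklySummable 𝕜 p xs ∧ weakNorm 𝕜 p xs ≤ 1},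
    (∑' j, (∑' n, ‖xs.1 n (x j)‖ ^ p) ^ (q / p)) ^ (1 / q)

/-- `u : X → Y` is absolutely `p`-summing: there is `C > 0` with
`(∑_{j=1}^k ‖u(x_j)‖^p)^{1/p} ≤ C sup_{φ ∈ B_{X*}} (∑_{j=1}^k |φ(x_j)|^p)^{1/p}`
for all finite families. -/
def AbsolutelySumming (𝕜 : Type*) [RCLike 𝕜] {X Y : Type*} [NormedAddCommGroup X]
    [NormedSpace 𝕜 X] [NormedAddCommGroup Y] [NormedSpace 𝕜 Y] (p : ℝ)
    (u : X →L[𝕜] Y) : Prop :=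
  ∃ C > 0, ∀ (k : ℕ) (z : Fin k → X),
    (∑ j, ‖u (z j)‖ ^ p) ^ (1 / p) ≤
      C * ⨆ φ : {φ : StrongDual 𝕜 X // ‖φ‖ ≤ 1}, (∑ j, ‖φ.1 (z j)‖ ^ p) ^ (1 / p)

/-- The `p`-summing norm `π_p(u)`: the least admissible constant. -/
def piNorm (𝕜 : Type*) [RCLike 𝕜] {X Y : Type*} [NormedAddCommGroup X]
    [NormedSpace 𝕜 X] [NormedAddCommGroup Y] [NormedSpace 𝕜 Y] (p : ℝ)
    (u : X →L[𝕜] Y) : ℝ :=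
  sInf {C : ℝ | 0 < C ∧ ∀ (k : ℕ) (z : Fin k → X),
    (∑ j, ‖u (z j)‖ ^ p) ^ (1 / p) ≤
      C * ⨆ φ : {φ : StrongDual 𝕜 X // ‖φ‖ ≤ 1}, (∑ j, ‖φ.1 (z j)‖ ^ p) ^ (1 / p)}

variable {𝕜 E F : Type*}

open ENNReal in
private lemma aux_bdd {𝕜 X : Type*} [RCLike 𝕜] [NormedAddCommGroup X]
    [NormedSpace 𝕜 X] {t : ℝ} (ht : 1 ≤ t) (x : ℕ → X)
    (hx : ∀ φ : StrongDual 𝕜 X, Summable fun j => ‖φ (x j)‖ ^ t) :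
    ∃ M : ℝ, 0 ≤ M ∧ ∀ φ : StrongDual 𝕜 X, ‖φ‖ ≤ 1 → ∑' j, ‖φ (x j)‖ ^ t ≤ M := by
  have ht0 : (0:ℝ) < t := lt_of_lt_of_le one_pos ht
  set q : ℝ≥0∞ := ENNReal.ofReal t with hq
  haveI : Fact (1 ≤ q) := ⟨ENNReal.one_le_ofReal.2 ht⟩
  have hqt : q.toReal = t := ENNReal.toReal_ofReal ht0.le
  have hq0 : 0 < q.toReal := by rw [hqt]; exact ht0
  have hsingle_add : ∀ (n : ℕ) (a b : 𝕜),
      lp.single (E := fun _ : ℕ => 𝕜) q n (a + b) = lp.single q n a + lp.single q n b := by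
    intro n a b
    refine lp.ext ?_
    funext j
    rcases eq_or_ne j n with h | h
    · subst h
      simp [lp.single_apply_self]
    · simp [lp.single_apply_ne q n _ h]
  have hLnorm : ∀ (k : ℕ) (φ : StrongDual 𝕜 X),
      ‖∑ n ∈ Finset.range k, lp.single (E := fun _ : ℕ => 𝕜) q n (φ (x n))‖
        = (∑ n ∈ Finset.range k, ‖φ (x n)‖ ^ t) ^ (1 / t) := by
    intro k φ
    have h1 := lp.norm_sum_single (p := q) hq0 (fun n => φ (x n)) (Finset.range k)
    rw [hqt] at h1
    rw [← h1, ← Real.rpow_mul (norm_nonneg _), mul_one_div_cancel ht0.ne', Real.rpow_one]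
  have hex : ∀ k : ℕ, ∃ gk : StrongDual 𝕜 X →L[𝕜] lp (fun _ : ℕ => 𝕜) q,
      ∀ φ, gk φ = ∑ n ∈ Finset.range k, lp.single q n (φ (x n)) := by
    intro k
    refine ⟨LinearMap.mkContinuous
      { toFun := fun φ => ∑ n ∈ Finset.range k, lp.single q n (φ (x n))
        map_add' := fun φ ψ => by
          simp only [ContinuousLinearMap.add_apply, hsingle_add, Finset.sum_add_distrib]
        map_smul' := fun c φ => by
          simp only [ContinuousLinearMap.coe_smul', Pi.smul_apply, RingHom.id_apply,
            lp.single_smul, ← Finset.smul_sum] }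
      ((∑ n ∈ Finset.range k, ‖x n‖ ^ t) ^ (1 / t)) (fun φ => ?_), fun φ => rfl⟩
    simp only [LinearMap.coe_mk, AddHom.coe_mk]
    rw [hLnorm k φ]
    have h1 : ∑ n ∈ Finset.range k, ‖φ (x n)‖ ^ t
        ≤ ‖φ‖ ^ t * ∑ n ∈ Finset.range k, ‖x n‖ ^ t := by
      rw [Finset.mul_sum]
      refine Finset.sum_le_sum fun n _ => ?_
      rw [← Real.mul_rpow (norm_nonneg _) (norm_nonneg _)]
      exact Real.rpow_le_rpow (norm_nonneg _) (φ.le_opNorm _) ht0.le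
    calc (∑ n ∈ Finset.range k, ‖φ (x n)‖ ^ t) ^ (1 / t)
        ≤ (‖φ‖ ^ t * ∑ n ∈ Finset.range k, ‖x n‖ ^ t) ^ (1 / t) :=
          Real.rpow_le_rpow (Finset.sum_nonneg fun n _ => Real.rpow_nonneg (norm_nonneg _) _) h1
            (by positivity)
      _ = (∑ n ∈ Finset.range k, ‖x n‖ ^ t) ^ (1 / t) * ‖φ‖ := by
          rw [Real.mul_rpow (Real.rpow_nonneg (norm_nonneg _) _)
              (Finset.sum_nonneg fun n _ => Real.rpow_nonneg (norm_nonneg _) _),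
            ← Real.rpow_mul (norm_nonneg _), mul_one_div_cancel ht0.ne', Real.rpow_one, mul_comm]
  choose g hg using hex
  have hptwise : ∀ φ : StrongDual 𝕜 X, ∃ Cφ, ∀ k, ‖g k φ‖ ≤ Cφ := by
    intro φ
    refine ⟨(∑' j, ‖φ (x j)‖ ^ t) ^ (1 / t), fun k => ?_⟩
    rw [hg k φ, hLnorm k φ]
    exact Real.rpow_le_rpow (Finset.sum_nonneg fun n _ => Real.rpow_nonneg (norm_nonneg _) _)
      (Summable.sum_le_tsum (Finset.range k) (fun n _ => Real.rpow_nonneg (norm_nonneg _) _) (hx φ))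
      (by positivity)
  obtain ⟨C', hC'⟩ := banach_steinhaus hptwise
  refine ⟨(max C' 0) ^ t, Real.rpow_nonneg (le_max_right _ _) _, fun φ hφ => ?_⟩
  have hb : ∀ k, ∑ n ∈ Finset.range k, ‖φ (x n)‖ ^ t ≤ (max C' 0) ^ t := by
    intro k
    have h1 : ‖g k φ‖ ≤ max C' 0 := by
      calc ‖g k φ‖ ≤ ‖g k‖ * ‖φ‖ := (g k).le_opNorm φ
        _ ≤ max C' 0 * 1 :=
            mul_le_mul ((hC' k).trans (le_max_left _ _)) hφ (norm_nonneg _) (le_max_right _ _)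
        _ = max C' 0 := mul_one _
    have h2 : (∑ n ∈ Finset.range k, ‖φ (x n)‖ ^ t) ^ (1 / t) ≤ max C' 0 := by
      rw [← hLnorm k φ, ← hg k φ]; exact h1
    calc ∑ n ∈ Finset.range k, ‖φ (x n)‖ ^ t
        = ((∑ n ∈ Finset.range k, ‖φ (x n)‖ ^ t) ^ (1 / t)) ^ t := by
          rw [← Real.rpow_mul (Finset.sum_nonneg fun n _ => Real.rpow_nonneg (norm_nonneg _) _),
            one_div_mul_cancel ht0.ne', Real.rpow_one]
      _ ≤ (max C' 0) ^ t :=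
          Real.rpow_le_rpow (Real.rpow_nonneg (Finset.sum_nonneg fun n _ =>
            Real.rpow_nonneg (norm_nonneg _) _) _) h2 ht0.le
  exact Real.tsum_le_of_sum_range_le (fun n => Real.rpow_nonneg (norm_nonneg _) _) hb

private lemma weakNorm_nonneg' (𝕜 : Type*) [RCLike 𝕜] {X : Type*} [NormedAddCommGroup X]
    [NormedSpace 𝕜 X] (t : ℝ) (x : ℕ → X) : 0 ≤ weakNorm 𝕜 t x :=
  Real.iSup_nonneg fun _ =>
    Real.rpow_nonneg (tsum_nonneg fun _ => Real.rpow_nonneg (norm_nonneg _) _) _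

private lemma tsum_le_weakNorm_pow {𝕜 X : Type*} [RCLike 𝕜] [NormedAddCommGroup X]
    [NormedSpace 𝕜 X] {t : ℝ} (ht : 1 ≤ t) (x : ℕ → X)
    (hx : ∀ φ : StrongDual 𝕜 X, Summable fun j => ‖φ (x j)‖ ^ t)
    {φ : StrongDual 𝕜 X} (hφ : ‖φ‖ ≤ 1) :
    ∑' j, ‖φ (x j)‖ ^ t ≤ (weakNorm 𝕜 t x) ^ t := by
  have ht0 : (0:ℝ) < t := lt_of_lt_of_le one_pos ht
  obtain ⟨M, hM0, hM⟩ := aux_bdd ht x hx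
  have hbdd : BddAbove (Set.range fun ψ : {ψ : StrongDual 𝕜 X // ‖ψ‖ ≤ 1} =>
      (∑' j, ‖ψ.1 (x j)‖ ^ t) ^ (1 / t)) := by
    refine ⟨M ^ (1 / t), ?_⟩
    rintro _ ⟨ψ, rfl⟩
    exact Real.rpow_le_rpow (tsum_nonneg fun _ => Real.rpow_nonneg (norm_nonneg _) _)
      (hM ψ.1 ψ.2) (by positivity)
  have h1 : (∑' j, ‖φ (x j)‖ ^ t) ^ (1 / t) ≤ weakNorm 𝕜 t x := by
    unfold weakNorm
    exact le_ciSup hbdd (⟨φ, hφ⟩ : {ψ : StrongDual 𝕜 X // ‖ψ‖ ≤ 1})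
  calc ∑' j, ‖φ (x j)‖ ^ t = ((∑' j, ‖φ (x j)‖ ^ t) ^ (1 / t)) ^ t := by
        rw [← Real.rpow_mul (tsum_nonneg fun _ => Real.rpow_nonneg (norm_nonneg _) _),
          one_div_mul_cancel ht0.ne', Real.rpow_one]
    _ ≤ (weakNorm 𝕜 t x) ^ t :=
        Real.rpow_le_rpow
          (Real.rpow_nonneg (tsum_nonneg fun _ => Real.rpow_nonneg (norm_nonneg _) _) _)
          h1 ht0.le

private lemma sum_le_weakNorm_pow {𝕜 X : Type*} [RCLike 𝕜] [NormedAddCommGroup X]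
    [NormedSpace 𝕜 X] {t : ℝ} (ht : 1 ≤ t) (x : ℕ → X)
    (hx : ∀ φ : StrongDual 𝕜 X, Summable fun j => ‖φ (x j)‖ ^ t)
    (φ : StrongDual 𝕜 X) (m : ℕ) :
    ∑ j ∈ Finset.range m, ‖φ (x j)‖ ^ t ≤ ‖φ‖ ^ t * (weakNorm 𝕜 t x) ^ t := by
  have ht0 : (0:ℝ) < t := lt_of_lt_of_le one_pos ht
  rcases eq_or_ne φ 0 with rfl | hφ
  · simp [Real.zero_rpow ht0.ne']
  · have hφpos : 0 < ‖φ‖ := norm_pos_iff.2 hφ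
    set c : ℝ := ‖φ‖⁻¹ with hc
    have hψ : ‖c • φ‖ ≤ 1 := by
      rw [norm_smul, Real.norm_eq_abs, hc, abs_of_nonneg (inv_nonneg.2 (norm_nonneg _)),
        inv_mul_cancel₀ hφpos.ne']
    have h2 := tsum_le_weakNorm_pow ht x hx hψ
    have h3 : ∑ j ∈ Finset.range m, ‖(c • φ) (x j)‖ ^ t ≤ (weakNorm 𝕜 t x) ^ t :=
      le_trans (Summable.sum_le_tsum _ (fun n _ => Real.rpow_nonneg (norm_nonneg _) _) (hx _)) h2
    have h4 : ∀ j, ‖(c • φ) (x j)‖ ^ t = (‖φ‖ ^ t)⁻¹ * ‖φ (x j)‖ ^ t := by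
      intro j
      rw [ContinuousLinearMap.smul_apply, norm_smul, Real.norm_eq_abs, hc,
        abs_of_nonneg (inv_nonneg.2 (norm_nonneg _)),
        Real.mul_rpow (inv_nonneg.2 (norm_nonneg _)) (norm_nonneg _),
        Real.inv_rpow (norm_nonneg _)]
    simp only [h4] at h3
    rw [← Finset.mul_sum] at h3
    have h5 : 0 < ‖φ‖ ^ t := Real.rpow_pos_of_pos hφpos _
    calc ∑ j ∈ Finset.range m, ‖φ (x j)‖ ^ t
        = ‖φ‖ ^ t * ((‖φ‖ ^ t)⁻¹ * ∑ j ∈ Finset.range m, ‖φ (x j)‖ ^ t) := by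
          rw [← mul_assoc, mul_inv_cancel₀ h5.ne', one_mul]
      _ ≤ ‖φ‖ ^ t * (weakNorm 𝕜 t x) ^ t := mul_le_mul_of_nonneg_left h3 h5.le

/-- if `p ≤ s` and the adjoint `T* : F* → E*` of `T` is absolutely `p`-summing,
then `(∑_j (∑_n |y_n^*(T x_j)|^p)^{s/p})^{1/s} ≤ π_p(T*) ‖(x_j)‖_{w,s} ‖(y_n^*)‖_{w,p}`
for all weakly `s`-summable `(x_j)` in `E` and weakly `p`-summable `(y_n^*)` in `F*`;
in particular `(T x_j)_j` is mid `(s,p)`-summable whenever `(x_j)` is weakly `s`-summable. -/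
theorem stmt16 [RCLike 𝕜] [NormedAddCommGroup E] [NormedSpace 𝕜 E] [CompleteSpace E]
    [NormedAddCommGroup F] [NormedSpace 𝕜 F] [CompleteSpace F]
    (p s : ℝ) (hp : 1 ≤ p) (hps : p ≤ s) (T : E →L[𝕜] F)
    (S : StrongDual 𝕜 F →L[𝕜] StrongDual 𝕜 E) (hS : ∀ (φ : StrongDual 𝕜 F) (y : E), S φ y = φ (T y))
    (hSsum : AbsolutelySumming 𝕜 p S) :
    (∀ x : ℕ → E, WeaklySummable 𝕜 s x → ∀ ys : ℕ → StrongDual 𝕜 F, WeaklySummable 𝕜 p ys →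
      (∑' j, (∑' n, ‖ys n (T (x j))‖ ^ p) ^ (s / p)) ^ (1 / s) ≤
        piNorm 𝕜 p S * weakNorm 𝕜 s x * weakNorm 𝕜 p ys) ∧
    (∀ x : ℕ → E, WeaklySummable 𝕜 s x → MidSummable 𝕜 s p fun j => T (x j)) := by
  have hp0 : (0:ℝ) < p := lt_of_lt_of_le one_pos hp
  have hs0 : (0:ℝ) < s := lt_of_lt_of_le hp0 hps
  have hs1 : (1:ℝ) ≤ s := hp.trans hps
  have key : ∀ C : ℝ, 0 < C → (∀ (k : ℕ) (z : Fin k → StrongDual 𝕜 F),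
        (∑ j, ‖S (z j)‖ ^ p) ^ (1 / p) ≤
          C * ⨆ φ : {φ : StrongDual 𝕜 (StrongDual 𝕜 F) // ‖φ‖ ≤ 1}, (∑ j, ‖φ.1 (z j)‖ ^ p) ^ (1 / p)) →
      ∀ x : ℕ → E, WeaklySummable 𝕜 s x → ∀ ys : ℕ → StrongDual 𝕜 F, WeaklySummable 𝕜 p ys →
      ∀ m : ℕ, ∑ j ∈ Finset.range m, (∑' n, ‖ys n (T (x j))‖ ^ p) ^ (s / p) ≤
        (C * weakNorm 𝕜 s x * weakNorm 𝕜 p ys) ^ s := by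
    intro C hC0 hCs x hx ys hys m
    haveI hne : Nonempty {φ : StrongDual 𝕜 (StrongDual 𝕜 F) // ‖φ‖ ≤ 1} := ⟨⟨0, by exact (norm_zero (E := StrongDual 𝕜 (StrongDual 𝕜 F))).trans_le zero_le_one⟩⟩
    set Ws := weakNorm 𝕜 s x with hWsdef
    set Wp := weakNorm 𝕜 p ys with hWpdef
    have hWs0 : 0 ≤ Ws := weakNorm_nonneg' 𝕜 s x
    have hWp0 : 0 ≤ Wp := weakNorm_nonneg' 𝕜 p ys
    have hsumj : ∀ j, Summable fun n => ‖ys n (T (x j))‖ ^ p := by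
      intro j
      have h1 := hys (inclusionInDoubleDual 𝕜 F (T (x j)))
      simpa only [NormedSpace.dual_def] using h1
    set α : ℕ → ℝ := fun j => ∑' n, ‖ys n (T (x j))‖ ^ p with hα
    have hα0 : ∀ j, 0 ≤ α j := fun j => tsum_nonneg fun n => Real.rpow_nonneg (norm_nonneg _) _
    have hxS : ∀ n : ℕ, ∑ j ∈ Finset.range m, ‖ys n (T (x j))‖ ^ s ≤ ‖S (ys n)‖ ^ s * Ws ^ s := by
      intro n
      have h1 := sum_le_weakNorm_pow hs1 x hx (S (ys n)) m
      simpa only [hS] using h1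
    have hSb : ∀ k : ℕ, ∑ n ∈ Finset.range k, ‖S (ys n)‖ ^ p ≤ (C * Wp) ^ p := by
      intro k
      have h1 := hCs k (fun i => ys i)
      have hsup : (⨆ φ : {φ : StrongDual 𝕜 (StrongDual 𝕜 F) // ‖φ‖ ≤ 1},
          (∑ i : Fin k, ‖φ.1 (ys i)‖ ^ p) ^ (1 / p)) ≤ Wp := by
        refine ciSup_le fun φ => ?_
        have h2 : (∑ i : Fin k, ‖φ.1 (ys i)‖ ^ p) ≤ ∑' n, ‖φ.1 (ys n)‖ ^ p := by
          rw [Fin.sum_univ_eq_sum_range (fun n => ‖φ.1 (ys n)‖ ^ p) k]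
          exact Summable.sum_le_tsum _ (fun n _ => Real.rpow_nonneg (norm_nonneg _) _) (hys φ.1)
        have h3 : (∑ i : Fin k, ‖φ.1 (ys i)‖ ^ p) ^ (1 / p)
            ≤ (∑' n, ‖φ.1 (ys n)‖ ^ p) ^ (1 / p) :=
          Real.rpow_le_rpow (Finset.sum_nonneg fun i _ => Real.rpow_nonneg (norm_nonneg _) _)
            h2 (by positivity)
        refine h3.trans ?_
        obtain ⟨M, hM0, hM⟩ := aux_bdd hp ys hys
        have hbdd : BddAbove (Set.range fun ψ : {ψ : StrongDual 𝕜 (StrongDual 𝕜 F) // ‖ψ‖ ≤ 1} =>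
            (∑' n, ‖ψ.1 (ys n)‖ ^ p) ^ (1 / p)) := by
          refine ⟨M ^ (1 / p), ?_⟩
          rintro _ ⟨ψ, rfl⟩
          exact Real.rpow_le_rpow (tsum_nonneg fun _ => Real.rpow_nonneg (norm_nonneg _) _)
            (hM ψ.1 ψ.2) (by positivity)
        rw [hWpdef]
        unfold weakNorm
        exact le_ciSup hbdd φ
      have h4 : (∑ i : Fin k, ‖S (ys i)‖ ^ p) ^ (1 / p) ≤ C * Wp :=
        h1.trans (mul_le_mul_of_nonneg_left hsup hC0.le)
      have h5 : ((∑ i : Fin k, ‖S (ys i)‖ ^ p) ^ (1 / p)) ^ p ≤ (C * Wp) ^ p :=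
        Real.rpow_le_rpow (Real.rpow_nonneg (Finset.sum_nonneg fun i _ =>
          Real.rpow_nonneg (norm_nonneg _) _) _) h4 hp0.le
      rw [← Real.rpow_mul (Finset.sum_nonneg fun i _ => Real.rpow_nonneg (norm_nonneg _) _),
        one_div_mul_cancel hp0.ne', Real.rpow_one,
        Fin.sum_univ_eq_sum_range (fun n => ‖S (ys n)‖ ^ p) k] at h5
      exact h5
    have hSsummable : Summable fun n => ‖S (ys n)‖ ^ p :=
      summable_of_sum_range_le (fun n => Real.rpow_nonneg (norm_nonneg _) _) hSb
    have hStsum : ∑' n, ‖S (ys n)‖ ^ p ≤ (C * Wp) ^ p :=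
      Real.tsum_le_of_sum_range_le (fun n => Real.rpow_nonneg (norm_nonneg _) _) hSb
    set r : ℝ := s / p with hr
    have hr1 : 1 ≤ r := (one_le_div hp0).2 hps
    have hr0 : 0 < r := lt_of_lt_of_le one_pos hr1
    have hA0 : 0 ≤ ∑ j ∈ Finset.range m, α j ^ r :=
      Finset.sum_nonneg fun j _ => Real.rpow_nonneg (hα0 j) _
    have hclaim : ∀ n : ℕ, ∑ j ∈ Finset.range m, α j ^ (r - 1) * ‖ys n (T (x j))‖ ^ p
        ≤ (∑ j ∈ Finset.range m, α j ^ r) ^ ((r - 1) / r) * (‖S (ys n)‖ ^ p * Ws ^ p) := by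
      intro n
      rcases eq_or_lt_of_le hps with hps' | hps'
      · have hr1' : r = 1 := by rw [hr, ← hps', div_self hp0.ne']
        rw [hr1']
        simp only [sub_self, Real.rpow_zero, one_mul, zero_div, div_one, Real.rpow_one]
        have h1 := hxS n
        rw [← hps'] at h1
        exact h1
      · have hrr : 1 < r := by rw [hr]; exact (one_lt_div hp0).2 hps'
        have hconj : ((r / (r - 1)) : ℝ).HolderConjugate r :=
          ((Real.holderConjugate_iff_eq_conjExponent hrr).2 rfl).symm
        have hH := Real.inner_le_Lp_mul_Lq_of_nonneg (Finset.range m)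
          (f := fun j => α j ^ (r - 1)) (g := fun j => ‖ys n (T (x j))‖ ^ p) hconj
          (fun j _ => Real.rpow_nonneg (hα0 j) _) (fun j _ => Real.rpow_nonneg (norm_nonneg _) _)
        have e1 : ∀ j : ℕ, (α j ^ (r - 1)) ^ (r / (r - 1)) = α j ^ r := by
          intro j
          rw [← Real.rpow_mul (hα0 j)]
          congr 1
          rw [mul_comm, div_mul_cancel₀ _ (sub_ne_zero.2 hrr.ne')]
        have e2 : ∀ j : ℕ, (‖ys n (T (x j))‖ ^ p) ^ r = ‖ys n (T (x j))‖ ^ s := by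
          intro j
          rw [← Real.rpow_mul (norm_nonneg _)]
          congr 1
          rw [hr, mul_comm, div_mul_cancel₀ _ hp0.ne']
        have e3 : (1 : ℝ) / (r / (r - 1)) = (r - 1) / r := one_div_div _ _
        simp only [e1, e2, e3] at hH
        refine hH.trans ?_
        have e4 : (∑ j ∈ Finset.range m, ‖ys n (T (x j))‖ ^ s) ^ (1 / r)
            ≤ ‖S (ys n)‖ ^ p * Ws ^ p := by
          have h5 : (∑ j ∈ Finset.range m, ‖ys n (T (x j))‖ ^ s) ^ (1 / r)
              ≤ (‖S (ys n)‖ ^ s * Ws ^ s) ^ (1 / r) :=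
            Real.rpow_le_rpow (Finset.sum_nonneg fun j _ => Real.rpow_nonneg (norm_nonneg _) _)
              (hxS n) (by positivity)
          refine h5.trans_eq ?_
          rw [Real.mul_rpow (Real.rpow_nonneg (norm_nonneg _) _) (Real.rpow_nonneg hWs0 _),
            ← Real.rpow_mul (norm_nonneg _), ← Real.rpow_mul hWs0]
          rw [show s * (1 / r) = p by rw [hr, one_div_div, mul_comm, div_mul_cancel₀ _ hs0.ne']]
        exact mul_le_mul_of_nonneg_left e4 (Real.rpow_nonneg hA0 _)
    have step1 : ∀ j : ℕ, α j ^ r = α j ^ (r - 1) * α j := by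
      intro j
      rcases eq_or_lt_of_le (hα0 j) with h0 | h0
      · rw [← h0, Real.zero_rpow hr0.ne', mul_zero]
      · have h2 := Real.rpow_add h0 (r - 1) 1
        rw [Real.rpow_one, sub_add_cancel] at h2
        exact h2
    have hmain : (∑ j ∈ Finset.range m, α j ^ r)
        ≤ (∑ j ∈ Finset.range m, α j ^ r) ^ ((r - 1) / r) * (Ws ^ p * (C * Wp) ^ p) := by
      calc ∑ j ∈ Finset.range m, α j ^ r
          = ∑' n, ∑ j ∈ Finset.range m, α j ^ (r - 1) * ‖ys n (T (x j))‖ ^ p := by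
            rw [Summable.tsum_finsetSum (fun j _ => ((hsumj j).mul_left _))]
            refine Finset.sum_congr rfl fun j _ => ?_
            rw [tsum_mul_left, step1 j]
        _ ≤ ∑' n, (∑ j ∈ Finset.range m, α j ^ r) ^ ((r - 1) / r)
              * (‖S (ys n)‖ ^ p * Ws ^ p) := by
            refine Summable.tsum_le_tsum hclaim ?_ ?_
            · exact (hasSum_sum fun j _ => ((hsumj j).mul_left (α j ^ (r - 1))).hasSum).summable
            · exact (hSsummable.mul_right _).mul_left _
        _ = (∑ j ∈ Finset.range m, α j ^ r) ^ ((r - 1) / r) * Ws ^ p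
              * ∑' n, ‖S (ys n)‖ ^ p := by
            rw [tsum_mul_left, tsum_mul_right]
            ring
        _ ≤ (∑ j ∈ Finset.range m, α j ^ r) ^ ((r - 1) / r) * Ws ^ p * (C * Wp) ^ p := by
            refine mul_le_mul_of_nonneg_left hStsum
              (mul_nonneg (Real.rpow_nonneg hA0 _) (Real.rpow_nonneg hWs0 _))
        _ = (∑ j ∈ Finset.range m, α j ^ r) ^ ((r - 1) / r) * (Ws ^ p * (C * Wp) ^ p) := by
            ring
    have hCW0 : 0 ≤ Ws ^ p * (C * Wp) ^ p :=
      mul_nonneg (Real.rpow_nonneg hWs0 _) (Real.rpow_nonneg (mul_nonneg hC0.le hWp0) _)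
    have hfin : ∑ j ∈ Finset.range m, α j ^ r ≤ (Ws ^ p * (C * Wp) ^ p) ^ r := by
      rcases eq_or_lt_of_le hA0 with h0 | h0
      · rw [← h0]
        exact Real.rpow_nonneg hCW0 _
      · have h1 : 0 < (∑ j ∈ Finset.range m, α j ^ r) ^ ((r - 1) / r) :=
          Real.rpow_pos_of_pos h0 _
        have h3 : (∑ j ∈ Finset.range m, α j ^ r)
            = (∑ j ∈ Finset.range m, α j ^ r) ^ ((r - 1) / r)
              * (∑ j ∈ Finset.range m, α j ^ r) ^ (1 / r) := by
          rw [← Real.rpow_add h0, ← add_div, sub_add_cancel, div_self hr0.ne',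
            Real.rpow_one]
        have h2' : (∑ j ∈ Finset.range m, α j ^ r) ^ ((r - 1) / r)
              * (∑ j ∈ Finset.range m, α j ^ r) ^ (1 / r)
            ≤ (∑ j ∈ Finset.range m, α j ^ r) ^ ((r - 1) / r) * (Ws ^ p * (C * Wp) ^ p) :=
          h3.symm.trans_le hmain
        have h2 : (∑ j ∈ Finset.range m, α j ^ r) ^ (1 / r) ≤ Ws ^ p * (C * Wp) ^ p :=
          le_of_mul_le_mul_left h2' h1
        have h4 : ((∑ j ∈ Finset.range m, α j ^ r) ^ (1 / r)) ^ r
            ≤ (Ws ^ p * (C * Wp) ^ p) ^ r :=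
          Real.rpow_le_rpow (Real.rpow_nonneg hA0 _) h2 hr0.le
        rw [← Real.rpow_mul hA0, one_div_mul_cancel hr0.ne', Real.rpow_one] at h4
        exact h4
    have hKr : (Ws ^ p * (C * Wp) ^ p) ^ r = (C * Ws * Wp) ^ s := by
      rw [← Real.mul_rpow hWs0 (mul_nonneg hC0.le hWp0),
        ← Real.rpow_mul (mul_nonneg hWs0 (mul_nonneg hC0.le hWp0)),
        show p * r = s by rw [hr, mul_comm, div_mul_cancel₀ _ hp0.ne']]
      congr 1
      ring
    exact hfin.trans_eq hKr
  obtain ⟨C₀, hC₀pos, hC₀⟩ := hSsum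
  have hboundC : ∀ x : ℕ → E, WeaklySummable 𝕜 s x → ∀ ys : ℕ → StrongDual 𝕜 F,
      WeaklySummable 𝕜 p ys → ∀ C : ℝ, 0 < C → (∀ (k : ℕ) (z : Fin k → StrongDual 𝕜 F),
        (∑ j, ‖S (z j)‖ ^ p) ^ (1 / p) ≤
          C * ⨆ φ : {φ : StrongDual 𝕜 (StrongDual 𝕜 F) // ‖φ‖ ≤ 1}, (∑ j, ‖φ.1 (z j)‖ ^ p) ^ (1 / p)) →
      (∑' j, (∑' n, ‖ys n (T (x j))‖ ^ p) ^ (s / p)) ^ (1 / s) ≤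
        C * (weakNorm 𝕜 s x * weakNorm 𝕜 p ys) := by
    intro x hx ys hys C hC0 hCs
    have hWs0 := weakNorm_nonneg' 𝕜 s x
    have hWp0 := weakNorm_nonneg' 𝕜 p ys
    have hterm0 : ∀ j : ℕ, 0 ≤ (∑' n, ‖ys n (T (x j))‖ ^ p) ^ (s / p) :=
      fun j => Real.rpow_nonneg (tsum_nonneg fun n => Real.rpow_nonneg (norm_nonneg _) _) _
    have h1 : (∑' j, (∑' n, ‖ys n (T (x j))‖ ^ p) ^ (s / p))
        ≤ (C * weakNorm 𝕜 s x * weakNorm 𝕜 p ys) ^ s :=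
      Real.tsum_le_of_sum_range_le hterm0 (key C hC0 hCs x hx ys hys)
    have h2 : (∑' j, (∑' n, ‖ys n (T (x j))‖ ^ p) ^ (s / p)) ^ (1 / s)
        ≤ ((C * weakNorm 𝕜 s x * weakNorm 𝕜 p ys) ^ s) ^ (1 / s) :=
      Real.rpow_le_rpow (tsum_nonneg hterm0) h1 (by positivity)
    rw [← Real.rpow_mul (by positivity), mul_one_div_cancel hs0.ne', Real.rpow_one,
      mul_assoc] at h2
    exact h2
  constructor
  · intro x hx ys hys
    have hWs0 := weakNorm_nonneg' 𝕜 s x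
    have hWp0 := weakNorm_nonneg' 𝕜 p ys
    have hD0 : 0 ≤ weakNorm 𝕜 s x * weakNorm 𝕜 p ys := mul_nonneg hWs0 hWp0
    rcases eq_or_lt_of_le hD0 with hD' | hD'
    · have h1 := hboundC x hx ys hys C₀ hC₀pos hC₀
      rw [← hD', mul_zero] at h1
      have heq : piNorm 𝕜 p S * weakNorm 𝕜 s x * weakNorm 𝕜 p ys = 0 := by
        rw [mul_assoc, ← hD', mul_zero]
      exact h1.trans_eq heq.symm
    · have hle : (∑' j, (∑' n, ‖ys n (T (x j))‖ ^ p) ^ (s / p)) ^ (1 / s)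
          / (weakNorm 𝕜 s x * weakNorm 𝕜 p ys) ≤ piNorm 𝕜 p S := by
        unfold piNorm
        refine le_csInf ⟨C₀, hC₀pos, hC₀⟩ ?_
        rintro C ⟨hC0', hCs'⟩
        rw [div_le_iff₀ hD']
        exact hboundC x hx ys hys C hC0' hCs'
      calc (∑' j, (∑' n, ‖ys n (T (x j))‖ ^ p) ^ (s / p)) ^ (1 / s)
          = (∑' j, (∑' n, ‖ys n (T (x j))‖ ^ p) ^ (s / p)) ^ (1 / s)
            / (weakNorm 𝕜 s x * weakNorm 𝕜 p ys) * (weakNorm 𝕜 s x * weakNorm 𝕜 p ys) :=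
            (div_mul_cancel₀ _ hD'.ne').symm
        _ ≤ piNorm 𝕜 p S * (weakNorm 𝕜 s x * weakNorm 𝕜 p ys) :=
            mul_le_mul_of_nonneg_right hle hD0
        _ = piNorm 𝕜 p S * weakNorm 𝕜 s x * weakNorm 𝕜 p ys := by ring
  · intro x hx ys hys
    refine summable_of_sum_range_le (c := (C₀ * weakNorm 𝕜 s x * weakNorm 𝕜 p ys) ^ s)
      (fun j => Real.rpow_nonneg
        (tsum_nonneg fun n => Real.rpow_nonneg (norm_nonneg _) _) _) (fun m => ?_)
    simpa using key C₀ hC₀pos hC₀ x hx ys hys m
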